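/- For every γ ∈ Δ_n (i.e., γ ∈ B_n with γ(n) > 0), fmaj(-γ) = fmaj(γ) + n. -/

import Mathlib

open Finset Polynomial

/-- The hyperoctahedral group `B n`, modeled as pairs (permutation, sign vector):
the signed permutation with window `β(i) = ±(σ(i)+1)`. -/
abbrev Bgrp (n : ℕ) := Equiv.Perm (Fin n) × (Fin n → Bool)

/-- The window entry `β(i)` (a nonzero integer). -/
def wdw {n : ℕ} (β : Bgrp n) (i : Fin n) : ℤ :=
  (if β.2 i then -1 else 1) * ((β.1 i : ℤ) + 1)

/-- Window entry at a `ℕ` position (0-based), `0` out of range. -/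
def wdwN {n : ℕ} (β : Bgrp n) (i : ℕ) : ℤ :=
  if h : i < n then wdw β ⟨i, h⟩ else 0

/-- Number of inversions of the window. -/
def invB {n : ℕ} (β : Bgrp n) : ℕ :=
  ((univ : Finset (Fin n × Fin n)).filter
    (fun p => p.1 < p.2 ∧ wdw β p.2 < wdw β p.1)).card

/-- The set of positions with negative entries. -/
def NegB {n : ℕ} (β : Bgrp n) : Finset (Fin n) :=
  univ.filter (fun i => wdw β i < 0)

def N1 {n : ℕ} (β : Bgrp n) : ℕ := (NegB β).card

def N2 {n : ℕ} (β : Bgrp n) : ℕ :=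
  ((univ : Finset (Fin n × Fin n)).filter
    (fun p => p.1 < p.2 ∧ wdw β p.1 + wdw β p.2 < 0)).card

/-- The order `-1 ≺ -2 ≺ ⋯ ≺ -n ≺ 1 ≺ 2 ≺ ⋯ ≺ n` on nonzero integers. -/
def precLt (a b : ℤ) : Prop :=
  (a < 0 ∧ b < 0 ∧ b < a) ∨ (a < 0 ∧ 0 < b) ∨ (0 < a ∧ 0 < b ∧ a < b)

instance (a b : ℤ) : Decidable (precLt a b) := by unfold precLt; infer_instance

/-- Descent set of the window, with respect to `≺` (0-based positions). -/
def DesB {n : ℕ} (β : Bgrp n) : Finset ℕ :=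
  (range (n-1)).filter (fun i => precLt (wdwN β (i+1)) (wdwN β i))

/-- Major index: sum of the (1-based) descent positions. -/
def majB {n : ℕ} (β : Bgrp n) : ℕ := ∑ i ∈ DesB β, (i+1)

/-- Flag-major index. -/
def fmaj {n : ℕ} (β : Bgrp n) : ℕ := 2 * majB β + N1 β

/-- Group multiplication (composition of signed permutations). -/
def bmul {n : ℕ} (β γ : Bgrp n) : Bgrp n :=
  (β.1 * γ.1, fun i => xor (γ.2 i) (β.2 (γ.1 i)))

/-- The identity signed permutation. -/
def bone (n : ℕ) : Bgrp n := (1, fun _ => false)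

/-- The Coxeter generators `s_0, s_1, …, s_{n-1}` of `B n`. -/
def BGens (n : ℕ) : Set (Bgrp n) :=
  { b | (∃ h : 0 < n, b = ((1 : Equiv.Perm (Fin n)), fun j => decide (j = (⟨0, h⟩ : Fin n)))) ∨
        (∃ (i : ℕ) (h : i + 1 < n),
          b = (Equiv.swap ⟨i, Nat.lt_of_succ_lt h⟩ ⟨i+1, h⟩, fun _ => false)) }

/-- Minimal length of an expression of `β` as a product of the generators of `B n`. -/
noncomputable def lenB {n : ℕ} (β : Bgrp n) : ℕ :=
  sInf {k | ∃ l : List (Bgrp n), l.length = k ∧ (∀ g ∈ l, g ∈ BGens n) ∧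
    l.foldr bmul (bone n) = β}

/-- The Coxeter generators `s_0^D, s_1, …, s_{n-1}` of `D n`. -/
def DGens (n : ℕ) : Set (Bgrp n) :=
  { b | (∃ h : 1 < n,
          b = (Equiv.swap ⟨0, Nat.lt_of_succ_lt h⟩ ⟨1, h⟩, fun (j : Fin n) => decide ((j : ℕ) < 2))) ∨
        (∃ (i : ℕ) (h : i + 1 < n),
          b = (Equiv.swap ⟨i, Nat.lt_of_succ_lt h⟩ ⟨i+1, h⟩, fun _ => false)) }

/-- Minimal length of an expression as a product of the generators of `D n`. -/
noncomputable def lenD {n : ℕ} (β : Bgrp n) : ℕ :=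
  sInf {k | ∃ l : List (Bgrp n), l.length = k ∧ (∀ g ∈ l, g ∈ DGens n) ∧
    l.foldr bmul (bone n) = β}

/-- The even-signed permutation group `D n` as a finset of `B n`. -/
def Dgrp (n : ℕ) : Finset (Bgrp n) := univ.filter (fun γ => Even (N1 γ))

/-- `Δ_n = {γ ∈ B_n : γ(n) > 0}`. -/
def DeltaSet (n : ℕ) : Finset (Bgrp n) := univ.filter (fun γ => 0 < wdwN γ (n-1))

/-- `|γ|_n`: replace the last window entry by its absolute value. -/
def absLast {n : ℕ} (γ : Bgrp n) : Bgrp n :=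
  (γ.1, fun i => if (i : ℕ) = n - 1 then false else γ.2 i)

/-- The `D`-major index. -/
def Dmaj {n : ℕ} (γ : Bgrp n) : ℕ := fmaj (absLast γ)

/-- `-β`: negate all window entries. -/
def negB {n : ℕ} (β : Bgrp n) : Bgrp n := (β.1, fun i => !β.2 i)

/-- Number of inversions of a permutation of `Fin n`. -/
def invS {n : ℕ} (σ : Equiv.Perm (Fin n)) : ℕ :=
  ((univ : Finset (Fin n × Fin n)).filter
    (fun p => p.1 < p.2 ∧ σ p.2 < σ p.1)).card

/-- Major index of a permutation of `Fin n` (usual order). -/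
def majS {n : ℕ} (σ : Equiv.Perm (Fin n)) : ℕ :=
  ∑ i ∈ (range (n-1)).filter
      (fun i => ∀ h : i + 1 < n, σ ⟨i+1, h⟩ < σ ⟨i, Nat.lt_of_succ_lt h⟩), (i+1)

/-- The `q`-analogue `[m]_q = 1 + q + ⋯ + q^{m-1}`, evaluated at a polynomial `q`. -/
noncomputable def qpoly (m : ℕ) (q : Polynomial ℤ) : Polynomial ℤ := ∑ k ∈ range m, q ^ k

lemma wdw_negB {n : ℕ} (β : Bgrp n) (i : Fin n) : wdw (negB β) i = - wdw β i := by
  unfold wdw negB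
  cases h : β.2 i <;> simp [h]

lemma wdw_ne_zero {n : ℕ} (β : Bgrp n) (i : Fin n) : wdw β i ≠ 0 := by
  unfold wdw
  have : (0:ℤ) < (β.1 i : ℤ) + 1 := by positivity
  cases h : β.2 i <;> simp <;> omega

lemma wdwN_negB {n : ℕ} (β : Bgrp n) (i : ℕ) : wdwN (negB β) i = - wdwN β i := by
  unfold wdwN
  split
  · exact wdw_negB β _
  · simp

lemma ite_mul_sub (P Q A B : Prop) [Decidable P] [Decidable Q] [Decidable A] [Decidable B] (x : ℤ)
    (h : (if P then (1:ℤ) else 0) - (if Q then 1 else 0)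
        = (if A then 1 else 0) - (if B then 1 else 0)) :
    (if P then x else 0) - (if Q then x else 0)
      = x * ((if A then (1:ℤ) else 0) - (if B then 1 else 0)) := by
  split_ifs at h ⊢ <;> linarith

lemma key_precLt (a b : ℤ) (ha : a ≠ 0) (hb : b ≠ 0) :
    ((if precLt (-b) (-a) then (1:ℤ) else 0) - if precLt b a then 1 else 0)
      = (if a < 0 then 1 else 0) - (if b < 0 then 1 else 0) := by
  unfold precLt
  split_ifs <;> omega

lemma telescope (s : ℕ → ℤ) (m : ℕ) :
    ∑ i ∈ range m, ((i:ℤ)+1) * (s i - s (i+1))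
      = (∑ i ∈ range m, s i) - (m:ℤ) * s m := by
  induction m with
  | zero => simp
  | succ m ih =>
      rw [Finset.sum_range_succ, ih, Finset.sum_range_succ]
      push_cast
      ring

/-- For `γ ∈ Δ_n`, `fmaj(-γ) = fmaj(γ) + n`. -/
theorem stmt16 (n : ℕ) (γ : Bgrp n) (hγ : γ ∈ DeltaSet n) :
    fmaj (negB γ) = fmaj γ + n := by
  have hpos : 0 < wdwN γ (n-1) := by
    simpa [DeltaSet] using hγ
  have hn : 0 < n := by
    by_contra h
    have : n = 0 := by omega
    subst this
    simp [wdwN] at hpos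
  -- the sign indicator
  set s : ℕ → ℤ := fun i => if wdwN γ i < 0 then 1 else 0 with hs
  -- s (n-1) = 0
  have hslast : s (n-1) = 0 := by
    simp only [hs]
    rw [if_neg (by omega)]
  -- sum of s over range n equals N1 γ
  have hN1sum : (∑ i ∈ range n, s i) = (N1 γ : ℤ) := by
    unfold N1 NegB
    rw [Finset.card_filter]
    push_cast
    rw [Finset.sum_range fun i => s i]
    apply Finset.sum_congr rfl
    intro i _
    simp only [hs, wdwN, dif_pos i.isLt]
  -- N1 of negation
  have hN1neg : (N1 (negB γ) : ℤ) = (n : ℤ) - N1 γ := by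
    have h1 : N1 (negB γ) + N1 γ = n := by
      unfold N1 NegB
      have : (univ.filter fun i => wdw (negB γ) i < 0)
          = univ.filter (fun i => ¬ (wdw γ i < 0)) := by
        apply Finset.filter_congr
        intro i _
        rw [wdw_negB]
        have := wdw_ne_zero γ i
        constructor <;> intro h <;> omega
      rw [this, add_comm, Finset.card_filter_add_card_filter_not,
        Finset.card_univ, Fintype.card_fin]
    omega
  -- maj of negation
  have hmaj : (majB (negB γ) : ℤ) = (majB γ : ℤ) + N1 γ := by
    unfold majB DesB
    rw [Finset.sum_filter, Finset.sum_filter]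
    push_cast
    have key : ∀ i ∈ range (n-1),
        ((if precLt (wdwN (negB γ) (i+1)) (wdwN (negB γ) i) then ((i:ℤ)+1) else 0)
          - if precLt (wdwN γ (i+1)) (wdwN γ i) then ((i:ℤ)+1) else 0)
        = ((i:ℤ)+1) * (s i - s (i+1)) := by
      intro i hi
      rw [Finset.mem_range] at hi
      rw [wdwN_negB, wdwN_negB]
      have ha : wdwN γ i ≠ 0 := by
        rw [wdwN, dif_pos (by omega : i < n)]
        exact wdw_ne_zero _ _
      have hb : wdwN γ (i+1) ≠ 0 := by
        rw [wdwN, dif_pos (by omega : i + 1 < n)]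
        exact wdw_ne_zero _ _
      have := key_precLt (wdwN γ i) (wdwN γ (i+1)) ha hb
      simp only [hs]
      exact ite_mul_sub _ _ _ _ _ this
    have hsum : ∑ i ∈ range (n-1),
        ((if precLt (wdwN (negB γ) (i+1)) (wdwN (negB γ) i) then ((i:ℤ)+1) else 0)
          - if precLt (wdwN γ (i+1)) (wdwN γ i) then ((i:ℤ)+1) else 0)
        = ∑ i ∈ range (n-1), ((i:ℤ)+1) * (s i - s (i+1)) :=
      Finset.sum_congr rfl key
    rw [Finset.sum_sub_distrib] at hsum
    rw [telescope] at hsum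
    rw [hslast] at hsum
    have hsplit : (∑ i ∈ range n, s i) = (∑ i ∈ range (n-1), s i) + s (n-1) := by
      have : n = (n-1) + 1 := by omega
      rw [this, Finset.sum_range_succ]
      congr 1 <;> omega
    rw [hslast, hN1sum] at hsplit
    omega
  unfold fmaj
  omega
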